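/- Let P be a reversible stochastic matrix with stationary distribution π (all π_i > 0). Then the gap between the largest eigenvalue 1 of P and its second-largest eigenvalue is at least φ(P)^2 / 2, where φ(P) is the conductance of P. -/

import Mathlib

section CheegerAux
open Finset

lemma levelset_bound (n : ℕ) (P : Matrix (Fin n) (Fin n) ℝ) (π : Fin n → ℝ)
    (hπ0 : ∀ i, 0 ≤ π i)
    (hPnn : ∀ i j, 0 ≤ P i j)
    (hrev : ∀ i j, π i * P i j = π j * P j i)
    (φ : ℝ)
    (hφ : ∀ B : Finset (Fin n), B.Nonempty → (∑ i ∈ B, π i) ≤ 1 / 2 →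
      φ * (∑ i ∈ B, π i) ≤ ∑ i ∈ B, ∑ j ∈ Bᶜ, π i * P i j) :
    ∀ g : Fin n → ℝ, (∀ i, 0 ≤ g i) →
      (∑ i ∈ univ.filter (fun i => 0 < g i), π i) ≤ 1/2 →
      2 * φ * (∑ i, π i * g i) ≤ ∑ i, ∑ j, π i * P i j * |g i - g j| := by
  suffices H : ∀ k (g : Fin n → ℝ), (univ.filter (fun i => 0 < g i)).card = k →
      (∀ i, 0 ≤ g i) → (∑ i ∈ univ.filter (fun i => 0 < g i), π i) ≤ 1/2 →
      2 * φ * (∑ i, π i * g i) ≤ ∑ i, ∑ j, π i * P i j * |g i - g j| by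
    intro g hg0 hh; exact H _ g rfl hg0 hh
  intro k
  induction k using Nat.strong_induction_on with
  | _ k ih =>
  intro g hcard hg0 hhalf
  set S : Finset (Fin n) := univ.filter (fun i => 0 < g i) with hS
  rcases S.eq_empty_or_nonempty with he | hne
  · have hg : ∀ i, g i = 0 := by
      intro i
      by_contra h
      have : i ∈ S := by
        simp only [hS, mem_filter, mem_univ, true_and]
        exact lt_of_le_of_ne (hg0 i) (Ne.symm h)
      simp [he] at this
    simp [hg]
  · set c : ℝ := S.inf' hne g with hc
    obtain ⟨i₀, hi₀S, hi₀⟩ := S.exists_mem_eq_inf' hne g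
    have hcpos : 0 < c := by
      rw [hc, hi₀]
      exact (mem_filter.mp hi₀S).2
    have hcle : ∀ i ∈ S, c ≤ g i := fun i hi => inf'_le g hi
    have hgS : ∀ i, i ∉ S → g i = 0 := by
      intro i hi
      have : ¬ 0 < g i := fun h => hi (by simp [hS, h])
      linarith [hg0 i]
    set g' : Fin n → ℝ := fun i => g i - min (g i) c with hg'
    have hg'0 : ∀ i, 0 ≤ g' i := fun i => by
      simp only [hg', sub_nonneg]; exact min_le_left _ _
    have hmem : ∀ i, min (g i) c = if i ∈ S then c else 0 := by
      intro i
      by_cases hi : i ∈ S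
      · simp [hi, min_eq_right (hcle i hi)]
      · simp [hi, hgS i hi, min_eq_left hcpos.le]
    have hg'S : ∀ i ∈ S, g' i = g i - c := by
      intro i hi; simp only [hg']; rw [hmem i, if_pos hi]
    have hg'Sc : ∀ i, i ∉ S → g' i = 0 := by
      intro i hi; simp only [hg']; rw [hmem i, if_neg hi, hgS i hi, sub_zero]
    have hsupp : univ.filter (fun i => 0 < g' i) ⊆ S := by
      intro i hi
      simp only [mem_filter, mem_univ, true_and] at hi
      by_contra h
      rw [hg'Sc i h] at hi; exact lt_irrefl _ hi
    have hssub : univ.filter (fun i => 0 < g' i) ⊂ S := by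
      refine ⟨hsupp, fun hsub => ?_⟩
      have := hsub hi₀S
      simp only [mem_filter, mem_univ, true_and] at this
      rw [hg'S i₀ hi₀S, ← hi₀, ← hc, sub_self] at this
      exact lt_irrefl _ this
    have hcard' : (univ.filter (fun i => 0 < g' i)).card < k := by
      rw [← hcard]; exact card_lt_card hssub
    have hhalf' : (∑ i ∈ univ.filter (fun i => 0 < g' i), π i) ≤ 1/2 :=
      le_trans (sum_le_sum_of_subset_of_nonneg hsupp (fun i _ _ => hπ0 i)) hhalf
    have IH := ih _ hcard' g' rfl hg'0 hhalf'
    have hfiltS : univ.filter (fun i => i ∈ S) = S := by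
      ext i; simp
    -- decomposition of ∑ π g
    have hdec : (∑ i, π i * g i) = (∑ i, π i * g' i) + c * ∑ i ∈ S, π i := by
      have h0 : ∀ i, π i * g i = π i * g' i + π i * min (g i) c := by
        intro i; simp only [hg']; ring
      rw [Finset.sum_congr rfl fun i _ => h0 i, Finset.sum_add_distrib]
      congr 1
      rw [Finset.mul_sum]
      rw [← Finset.sum_filter_add_sum_filter_not univ (fun i => i ∈ S)]
      have h1 : ∀ i ∈ univ.filter (fun i => i ∈ S), π i * min (g i) c = c * π i := by
        intro i hi; rw [hmem i, if_pos (mem_filter.mp hi).2]; ring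
      have h2 : ∀ i ∈ univ.filter (fun i => ¬ i ∈ S), π i * min (g i) c = 0 := by
        intro i hi; rw [hmem i, if_neg (mem_filter.mp hi).2]; ring
      rw [Finset.sum_congr rfl h1, Finset.sum_congr rfl h2, Finset.sum_const_zero,
        add_zero, hfiltS]
    -- pointwise identity for |g i - g j|
    have habs : ∀ i j, |g i - g j| = |g' i - g' j| + |min (g i) c - min (g j) c| := by
      intro i j
      by_cases hi : i ∈ S <;> by_cases hj : j ∈ S
      · rw [hmem i, hmem j, if_pos hi, if_pos hj, hg'S i hi, hg'S j hj,
          sub_self, abs_zero, add_zero]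
        congr 1; ring
      · rw [hmem i, hmem j, if_pos hi, if_neg hj, hg'S i hi, hg'Sc j hj, hgS j hj,
          sub_zero, sub_zero, sub_zero, abs_of_nonneg (hg0 i),
          abs_of_nonneg (show (0:ℝ) ≤ g i - c by linarith [hcle i hi]),
          abs_of_nonneg hcpos.le]
        ring
      · rw [hmem i, hmem j, if_neg hi, if_pos hj, hg'Sc i hi, hg'S j hj, hgS i hi,
          zero_sub, zero_sub, zero_sub, abs_neg, abs_neg, abs_neg,
          abs_of_nonneg (hg0 j),
          abs_of_nonneg (show (0:ℝ) ≤ g j - c by linarith [hcle j hj]),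
          abs_of_nonneg hcpos.le]
        ring
      · rw [hmem i, hmem j, if_neg hi, if_neg hj, hg'Sc i hi, hg'Sc j hj,
          hgS i hi, hgS j hj]
        simp
    -- split RHS
    have hrhs : (∑ i, ∑ j, π i * P i j * |g i - g j|)
        = (∑ i, ∑ j, π i * P i j * |g' i - g' j|)
          + ∑ i, ∑ j, π i * P i j * |min (g i) c - min (g j) c| := by
      rw [← Finset.sum_add_distrib]
      refine Finset.sum_congr rfl fun i _ => ?_
      rw [← Finset.sum_add_distrib]
      refine Finset.sum_congr rfl fun j _ => ?_
      rw [habs i j]; ring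
    -- the m-part equals 2 c F(S)
    have hcompl : (Sᶜ : Finset (Fin n)) = univ.filter (fun j => j ∉ S) := by
      ext j; simp
    have hF : (∑ i, ∑ j, π i * P i j * |min (g i) c - min (g j) c|)
        = 2 * c * ∑ i ∈ S, ∑ j ∈ Sᶜ, π i * P i j := by
      have key : ∀ i j, π i * P i j * |min (g i) c - min (g j) c|
          = (if i ∈ S ∧ j ∉ S then c * (π i * P i j) else 0)
            + (if i ∉ S ∧ j ∈ S then c * (π i * P i j) else 0) := by
        intro i j
        rw [hmem i, hmem j]
        by_cases hi : i ∈ S <;> by_cases hj : j ∈ S <;>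
          simp [hi, hj, abs_of_nonneg hcpos.le] <;> ring
      rw [Finset.sum_congr rfl fun i _ => Finset.sum_congr rfl fun j _ => key i j]
      have h1 : (∑ i, ∑ j, ((if i ∈ S ∧ j ∉ S then c * (π i * P i j) else 0)
            + (if i ∉ S ∧ j ∈ S then c * (π i * P i j) else 0)))
          = (∑ i, ∑ j, (if i ∈ S ∧ j ∉ S then c * (π i * P i j) else 0))
            + ∑ i, ∑ j, (if i ∉ S ∧ j ∈ S then c * (π i * P i j) else 0) := by
        rw [← Finset.sum_add_distrib]
        exact Finset.sum_congr rfl fun i _ => by rw [← Finset.sum_add_distrib]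
      rw [h1]
      have h2 : (∑ i, ∑ j, (if i ∈ S ∧ j ∉ S then c * (π i * P i j) else 0))
          = c * ∑ i ∈ S, ∑ j ∈ Sᶜ, π i * P i j := by
        have hin : ∀ i, (∑ j, (if i ∈ S ∧ j ∉ S then c * (π i * P i j) else 0))
            = if i ∈ S then c * ∑ j ∈ Sᶜ, π i * P i j else 0 := by
          intro i
          by_cases hi : i ∈ S
          · simp only [hi, true_and, if_pos]
            rw [Finset.mul_sum, hcompl, Finset.sum_filter]
          · simp [hi]
        rw [Finset.sum_congr rfl fun i _ => hin i, ← Finset.sum_filter, hfiltS,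
          Finset.mul_sum]
      have h3 : (∑ i, ∑ j, (if i ∉ S ∧ j ∈ S then c * (π i * P i j) else 0))
          = c * ∑ i ∈ S, ∑ j ∈ Sᶜ, π i * P i j := by
        rw [Finset.sum_comm]
        have hin : ∀ j, (∑ i, (if i ∉ S ∧ j ∈ S then c * (π i * P i j) else 0))
            = if j ∈ S then c * ∑ i ∈ Sᶜ, π i * P i j else 0 := by
          intro j
          by_cases hj : j ∈ S
          · simp only [hj, and_true, if_pos]
            rw [Finset.mul_sum, hcompl, Finset.sum_filter]
          · simp [hj]
        rw [Finset.sum_congr rfl fun j _ => hin j, ← Finset.sum_filter, hfiltS,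
          Finset.mul_sum]
        refine Finset.sum_congr rfl fun j hj => ?_
        rw [Finset.mul_sum, Finset.mul_sum]
        exact Finset.sum_congr rfl fun i hi => by rw [hrev i j]
      rw [h2, h3]; ring
    have hφS := hφ S hne hhalf
    have hstep : 2 * c * (φ * ∑ i ∈ S, π i) ≤ 2 * c * ∑ i ∈ S, ∑ j ∈ Sᶜ, π i * P i j :=
      mul_le_mul_of_nonneg_left hφS (by linarith)
    rw [hdec, hrhs, hF]
    nlinarith [IH, hstep]


variable (n : ℕ) (P : Matrix (Fin n) (Fin n) ℝ) (π : Fin n → ℝ)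

lemma key_bound
    (hπpos : ∀ i, 0 < π i)
    (hPnn : ∀ i j, 0 ≤ P i j) (hProw : ∀ i, ∑ j, P i j = 1)
    (hrev : ∀ i j, π i * P i j = π j * P j i)
    (φ : ℝ) (hφ0 : 0 ≤ φ)
    (hφ : ∀ B : Finset (Fin n), B.Nonempty → (∑ i ∈ B, π i) ≤ 1 / 2 →
      φ * (∑ i ∈ B, π i) ≤ ∑ i ∈ B, ∑ j ∈ Bᶜ, π i * P i j)
    (lam : ℝ) (w : Fin n → ℝ)
    (heig : P.mulVec w = lam • w)
    (hpos : ∃ i, 0 < w i)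
    (hhalf : ∑ i ∈ univ.filter (fun i => 0 < w i), π i ≤ 1/2) :
    lam ≤ 1 - φ ^ 2 / 2 := by
  have hlvl := levelset_bound n P π (fun i => (hπpos i).le) hPnn hrev φ hφ
  set u : Fin n → ℝ := fun i => max (w i) 0 with hu
  have hu0 : ∀ i, 0 ≤ u i := fun i => le_max_right _ _
  have huw : ∀ i, w i ≤ u i := fun i => le_max_left _ _
  have heigi : ∀ i, ∑ j, P i j * w j = lam * w i := by
    intro i
    have := congrFun heig i
    simpa [Matrix.mulVec, dotProduct] using this
  set N : ℝ := ∑ i, π i * (u i) ^ 2 with hN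
  set C : ℝ := ∑ i, ∑ j, π i * P i j * (u i * u j) with hC
  obtain ⟨i₁, hi₁⟩ := hpos
  have hNpos : 0 < N := by
    have h1 : 0 < π i₁ * (u i₁) ^ 2 :=
      mul_pos (hπpos i₁) (pow_pos (lt_of_lt_of_le hi₁ (huw i₁)) 2)
    refine lt_of_lt_of_le h1 ?_
    exact Finset.single_le_sum (f := fun i => π i * (u i) ^ 2)
      (fun i _ => mul_nonneg (hπpos i).le (sq_nonneg _)) (mem_univ i₁)
  have hC0 : 0 ≤ C := by
    refine Finset.sum_nonneg fun i _ => Finset.sum_nonneg fun j _ => ?_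
    have := hπpos i
    have := hPnn i j
    have := hu0 i
    have := hu0 j
    positivity
  -- stationary: column sums
  have hstat : ∀ j, ∑ i, π i * P i j = π j := by
    intro j
    calc ∑ i, π i * P i j = ∑ i, π j * P j i :=
          Finset.sum_congr rfl fun i _ => hrev i j
      _ = π j * ∑ i, P j i := by rw [Finset.mul_sum]
      _ = π j := by rw [hProw j, mul_one]
  have hA : (∑ i, ∑ j, π i * P i j * u i ^ 2) = N := by
    refine Finset.sum_congr rfl fun i _ => ?_
    calc ∑ j, π i * P i j * u i ^ 2 = (π i * u i ^ 2) * ∑ j, P i j := by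
          rw [Finset.mul_sum]; exact Finset.sum_congr rfl fun j _ => by ring
      _ = π i * u i ^ 2 := by rw [hProw i, mul_one]
  have hB : (∑ i, ∑ j, π i * P i j * u j ^ 2) = N := by
    rw [Finset.sum_comm]
    refine Finset.sum_congr rfl fun j _ => ?_
    calc ∑ i, π i * P i j * u j ^ 2 = (∑ i, π i * P i j) * u j ^ 2 := by
          rw [Finset.sum_mul]
      _ = π j * u j ^ 2 := by rw [hstat j]
  -- E = 2N - 2C  and  D = 2N + 2C
  have hEid : (∑ i, ∑ j, π i * P i j * (u i - u j) ^ 2) = 2 * N - 2 * C := by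
    have h1 : ∀ i j, π i * P i j * (u i - u j) ^ 2
        = π i * P i j * u i ^ 2 + π i * P i j * u j ^ 2
          - 2 * (π i * P i j * (u i * u j)) := fun i j => by ring
    calc (∑ i, ∑ j, π i * P i j * (u i - u j) ^ 2)
        = ∑ i, ((∑ j, π i * P i j * u i ^ 2) + (∑ j, π i * P i j * u j ^ 2)
            - 2 * ∑ j, π i * P i j * (u i * u j)) := by
          refine Finset.sum_congr rfl fun i _ => ?_
          rw [Finset.sum_congr rfl fun j _ => h1 i j, Finset.sum_sub_distrib,
            Finset.sum_add_distrib, Finset.mul_sum]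
      _ = 2 * N - 2 * C := by
          rw [Finset.sum_sub_distrib, Finset.sum_add_distrib, hA, hB, hC,
            ← Finset.mul_sum]
          ring
  have hDid : (∑ i, ∑ j, π i * P i j * (u i + u j) ^ 2) = 2 * N + 2 * C := by
    have h1 : ∀ i j, π i * P i j * (u i + u j) ^ 2
        = π i * P i j * u i ^ 2 + π i * P i j * u j ^ 2
          + 2 * (π i * P i j * (u i * u j)) := fun i j => by ring
    calc (∑ i, ∑ j, π i * P i j * (u i + u j) ^ 2)
        = ∑ i, ((∑ j, π i * P i j * u i ^ 2) + (∑ j, π i * P i j * u j ^ 2)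
            + 2 * ∑ j, π i * P i j * (u i * u j)) := by
          refine Finset.sum_congr rfl fun i _ => ?_
          rw [Finset.sum_congr rfl fun j _ => h1 i j, Finset.sum_add_distrib,
            Finset.sum_add_distrib, Finset.mul_sum]
      _ = 2 * N + 2 * C := by
          rw [Finset.sum_add_distrib, Finset.sum_add_distrib, hA, hB, hC,
            ← Finset.mul_sum]
          ring
  have hCN : C ≤ N := by
    have h0 : (0:ℝ) ≤ ∑ i, ∑ j, π i * P i j * (u i - u j) ^ 2 := by
      refine Finset.sum_nonneg fun i _ => Finset.sum_nonneg fun j _ => ?_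
      have := hπpos i; have := hPnn i j; positivity
    linarith [hEid ▸ h0]
  -- C ≥ lam N
  have hClam : lam * N ≤ C := by
    have hCalt : C = ∑ i, π i * u i * ∑ j, P i j * u j := by
      refine Finset.sum_congr rfl fun i _ => ?_
      rw [Finset.mul_sum]
      exact Finset.sum_congr rfl fun j _ => by ring
    rw [hCalt, hN, Finset.mul_sum]
    refine Finset.sum_le_sum fun i _ => ?_
    by_cases hwi : 0 < w i
    · have hui : u i = w i := max_eq_left hwi.le
      have h2 : lam * w i ≤ ∑ j, P i j * u j := by
        rw [← heigi i]
        exact Finset.sum_le_sum fun j _ =>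
          mul_le_mul_of_nonneg_left (huw j) (hPnn i j)
      calc lam * (π i * u i ^ 2) = (π i * u i) * (lam * w i) := by rw [hui]; ring
        _ ≤ (π i * u i) * ∑ j, P i j * u j :=
            mul_le_mul_of_nonneg_left h2 (by have := (hπpos i).le; have := hu0 i; positivity)
        _ = π i * u i * ∑ j, P i j * u j := by ring
    · have hui : u i = 0 := max_eq_right (not_lt.mp hwi)
      rw [hui]
      simp
  -- level set bound : 2 φ N ≤ Q
  set Q : ℝ := ∑ i, ∑ j, π i * P i j * |u i ^ 2 - u j ^ 2| with hQ
  have hfilt : (univ.filter fun i => 0 < u i ^ 2) = univ.filter (fun i => 0 < w i) := by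
    ext i
    simp only [mem_filter, mem_univ, true_and]
    constructor
    · intro h
      by_contra hw
      have : u i = 0 := max_eq_right (not_lt.mp hw)
      rw [this] at h; simp at h
    · intro h
      have : u i = w i := max_eq_left h.le
      rw [this]; positivity
  have hQlb : 2 * φ * N ≤ Q := by
    have := hlvl (fun i => u i ^ 2) (fun i => by positivity)
      (by rw [hfilt]; exact hhalf)
    simpa [hQ, hN] using this
  -- Cauchy-Schwarz
  have hCS : Q ^ 2 ≤ (2 * N - 2 * C) * (2 * N + 2 * C) := by
    set f : Fin n × Fin n → ℝ :=
      fun p => Real.sqrt (π p.1 * P p.1 p.2) * |u p.1 - u p.2| with hf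
    set g : Fin n × Fin n → ℝ :=
      fun p => Real.sqrt (π p.1 * P p.1 p.2) * (u p.1 + u p.2) with hg
    have hπP : ∀ i j, 0 ≤ π i * P i j := fun i j =>
      mul_nonneg (hπpos i).le (hPnn i j)
    have hfg : ∀ p : Fin n × Fin n, f p * g p = π p.1 * P p.1 p.2 * |u p.1 ^ 2 - u p.2 ^ 2| := by
      intro p
      have h1 : |u p.1 ^ 2 - u p.2 ^ 2| = |u p.1 - u p.2| * (u p.1 + u p.2) := by
        have : u p.1 ^ 2 - u p.2 ^ 2 = (u p.1 - u p.2) * (u p.1 + u p.2) := by ring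
        rw [this, abs_mul,
          abs_of_nonneg (show (0:ℝ) ≤ u p.1 + u p.2 from add_nonneg (hu0 p.1) (hu0 p.2))]
      rw [hf, hg, h1]
      have h2 : Real.sqrt (π p.1 * P p.1 p.2) * Real.sqrt (π p.1 * P p.1 p.2)
          = π p.1 * P p.1 p.2 := Real.mul_self_sqrt (hπP p.1 p.2)
      calc Real.sqrt (π p.1 * P p.1 p.2) * |u p.1 - u p.2|
            * (Real.sqrt (π p.1 * P p.1 p.2) * (u p.1 + u p.2))
          = (Real.sqrt (π p.1 * P p.1 p.2) * Real.sqrt (π p.1 * P p.1 p.2))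
            * (|u p.1 - u p.2| * (u p.1 + u p.2)) := by ring
        _ = π p.1 * P p.1 p.2 * (|u p.1 - u p.2| * (u p.1 + u p.2)) := by rw [h2]
    have hf2 : ∀ p : Fin n × Fin n, f p ^ 2 = π p.1 * P p.1 p.2 * (u p.1 - u p.2) ^ 2 := by
      intro p
      rw [hf, mul_pow, Real.sq_sqrt (hπP p.1 p.2), sq_abs]
    have hg2 : ∀ p : Fin n × Fin n, g p ^ 2 = π p.1 * P p.1 p.2 * (u p.1 + u p.2) ^ 2 := by
      intro p
      rw [hg, mul_pow, Real.sq_sqrt (hπP p.1 p.2)]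
    have hcs := Finset.sum_mul_sq_le_sq_mul_sq univ f g
    rw [Finset.sum_congr rfl fun p _ => hfg p,
      Finset.sum_congr rfl fun p _ => hf2 p,
      Finset.sum_congr rfl fun p _ => hg2 p] at hcs
    rw [Fintype.sum_prod_type, Fintype.sum_prod_type, Fintype.sum_prod_type] at hcs
    rw [hEid, hDid] at hcs
    exact hcs
  -- combine everything
  have hQ0 : 0 ≤ 2 * φ * N := by positivity
  have hQsq : (2 * φ * N) ^ 2 ≤ (2 * N - 2 * C) * (2 * N + 2 * C) :=
    le_trans (by nlinarith [hQlb]) hCS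
  nlinarith [hQsq, hClam, hC0, hCN, hNpos, sq_nonneg (N - C), sq_nonneg (lam * N - C),
    mul_pos hNpos hNpos]

end CheegerAux

open Finset in
/-- **The conductance bound** (Jerrum–Sinclair): for a reversible stochastic matrix `P`
with stationary distribution `π`, if `φ ≥ 0` is a lower bound on the conductance
(`φ·π(B) ≤ F(B)` for every nonempty `B` with `π(B) ≤ 1/2`), then every eigenvalue of
`P` other than `1` is at most `1 - φ²/2`; i.e. the gap between the largest eigenvalue
`1` and the second largest eigenvalue is at least `φ²/2`. -/
theorem conductance_eigenvalue_gap (n : ℕ)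
    (P : Matrix (Fin n) (Fin n) ℝ)
    (π : Fin n → ℝ)
    (hπpos : ∀ i, 0 < π i) (hπsum : ∑ i, π i = 1)
    (hPnn : ∀ i j, 0 ≤ P i j) (hProw : ∀ i, ∑ j, P i j = 1)
    (hrev : ∀ i j, π i * P i j = π j * P j i)
    (φ : ℝ) (hφ0 : 0 ≤ φ)
    (hφ : ∀ B : Finset (Fin n), B.Nonempty → (∑ i ∈ B, π i) ≤ 1 / 2 →
      φ * (∑ i ∈ B, π i) ≤ ∑ i ∈ B, ∑ j ∈ Bᶜ, π i * P i j) :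
    ∀ (lam : ℝ) (w : Fin n → ℝ), w ≠ 0 → P.mulVec w = lam • w →
      lam = 1 ∨ lam ≤ 1 - φ ^ 2 / 2 := by
  intro lam w hw0 heig
  by_cases hl : lam = 1
  · exact Or.inl hl
  right
  have hstat : ∀ j, ∑ i, π i * P i j = π j := by
    intro j
    calc ∑ i, π i * P i j = ∑ i, π j * P j i :=
          Finset.sum_congr rfl fun i _ => hrev i j
      _ = π j * ∑ i, P j i := by rw [Finset.mul_sum]
      _ = π j := by rw [hProw j, mul_one]
  -- π-mean of w is zero
  have h1 : (∑ i, π i * (P.mulVec w) i) = ∑ j, π j * w j := by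
    have hx : ∀ i, π i * (P.mulVec w) i = ∑ j, π i * P i j * w j := by
      intro i
      simp only [Matrix.mulVec, dotProduct, Finset.mul_sum]
      exact Finset.sum_congr rfl fun j _ => by ring
    rw [Finset.sum_congr rfl fun i _ => hx i, Finset.sum_comm]
    refine Finset.sum_congr rfl fun j _ => ?_
    calc ∑ i, π i * P i j * w j = (∑ i, π i * P i j) * w j := by
          rw [Finset.sum_mul]
      _ = π j * w j := by rw [hstat j]
  have h2 : (∑ i, π i * (P.mulVec w) i) = lam * ∑ i, π i * w i := by
    rw [heig, Finset.mul_sum]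
    exact Finset.sum_congr rfl fun i _ => by
      simp only [Pi.smul_apply, smul_eq_mul]; ring
  have hsum0 : (∑ i, π i * w i) = 0 := by
    have h3 : (lam - 1) * ∑ i, π i * w i = 0 := by
      rw [sub_mul, one_mul, ← h2, h1]; ring
    rcases mul_eq_zero.mp h3 with h | h
    · exact absurd (by linarith : lam = 1) hl
    · exact h
  have hex : ∃ i, w i ≠ 0 := by
    by_contra h
    push_neg at h
    exact hw0 (funext fun i => h i)
  -- there are both positive and negative entries
  have hpos : ∃ i, 0 < w i := by
    by_contra h
    push_neg at h
    have hnn : ∀ i ∈ univ, 0 ≤ π i * (-w i) :=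
      fun i _ => mul_nonneg (hπpos i).le (by linarith [h i])
    have hs : (∑ i, π i * (-w i)) = 0 := by
      rw [← neg_eq_zero, ← hsum0, ← Finset.sum_neg_distrib]
      exact Finset.sum_congr rfl fun i _ => by ring
    obtain ⟨i, hi⟩ := hex
    have := (Finset.sum_eq_zero_iff_of_nonneg hnn).mp hs i (mem_univ i)
    rcases mul_eq_zero.mp this with h' | h'
    · exact absurd h' (ne_of_gt (hπpos i))
    · exact hi (by linarith [neg_eq_zero.mp h'])
  have hneg : ∃ i, 0 < -w i := by
    by_contra h
    push_neg at h
    have hnn : ∀ i ∈ univ, 0 ≤ π i * w i :=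
      fun i _ => mul_nonneg (hπpos i).le (by linarith [h i])
    obtain ⟨i, hi⟩ := hex
    have := (Finset.sum_eq_zero_iff_of_nonneg hnn).mp hsum0 i (mem_univ i)
    rcases mul_eq_zero.mp this with h' | h'
    · exact absurd h' (ne_of_gt (hπpos i))
    · exact hi h'
  -- one of the two sign sets has π-mass ≤ 1/2
  set Sp : Finset (Fin n) := univ.filter (fun i => 0 < w i) with hSp
  set Sm : Finset (Fin n) := univ.filter (fun i => 0 < (-w) i) with hSm
  have hdisj : Disjoint Sp Sm := by
    rw [Finset.disjoint_left]
    intro i hip him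
    simp only [hSp, hSm, mem_filter, mem_univ, true_and, Pi.neg_apply] at hip him
    linarith
  have hle1 : (∑ i ∈ Sp, π i) + (∑ i ∈ Sm, π i) ≤ 1 := by
    rw [← Finset.sum_union hdisj, ← hπsum]
    exact Finset.sum_le_sum_of_subset_of_nonneg (Finset.subset_univ _)
      (fun i _ _ => (hπpos i).le)
  by_cases hcase : (∑ i ∈ Sp, π i) ≤ 1/2
  · exact key_bound n P π hπpos hPnn hProw hrev φ hφ0 hφ lam w heig hpos hcase
  · have hm : (∑ i ∈ Sm, π i) ≤ 1/2 := by linarith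
    have heig' : P.mulVec (-w) = lam • (-w) := by
      rw [Matrix.mulVec_neg, heig, smul_neg]
    have hpos' : ∃ i, 0 < (-w) i := hneg
    exact key_bound n P π hπpos hPnn hProw hrev φ hφ0 hφ lam (-w) heig' hpos' hm
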